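/- Let Q be a quandle. The right multiplication group Rmlt(Q) is abelian if and only if Q is both medial and graphic. -/
import Mathlib


/-- A (right) rack: a set with a binary operation `mul` such that every right
translation `R_x : y ↦ y * x` is a bijection (with inverse given by the right
division `div`), satisfying right self-distributivity. -/
class RightRack (Q : Type*) where
  mul : Q → Q → Q
  div : Q → Q → Q
  div_mul : ∀ x y : Q, mul (div x y) y = x
  mul_div : ∀ x y : Q, div (mul x y) y = x
  self_distrib : ∀ x y z : Q, mul (mul x y) z = mul (mul x z) (mul y z)

namespace RightRack

/-- The right translation `R_x` as a permutation of `Q`. -/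
def rt {Q : Type*} [RightRack Q] (x : Q) : Equiv.Perm Q where
  toFun y := mul y x
  invFun y := div y x
  left_inv y := mul_div y x
  right_inv y := div_mul y x

/-- The right multiplication group `Rmlt(Q)`: the subgroup of the symmetric group
on `Q` generated by all right translations. -/
def rmlt (Q : Type*) [RightRack Q] : Subgroup (Equiv.Perm Q) :=
  Subgroup.closure (Set.range (rt : Q → Equiv.Perm Q))

end RightRack

/-- A quandle: an idempotent rack. -/
class RightQuandle (Q : Type*) extends RightRack Q where
  idem : ∀ x : Q, mul x x = x

open RightRack

section Aux
variable {Q : Type*} [RightQuandle Q]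

lemma rinj (z : Q) : Function.Injective (fun a : Q => mul a z) := by
  intro a b h
  have := congrArg (fun t => div t z) h
  simpa [RightRack.mul_div] using this

/-- backward: medial + graphic + idem gives commuting translations -/
lemma key_of_mg
    (hm : ∀ x u v y : Q, mul (mul x u) (mul v y) = mul (mul x v) (mul u y))
    (hg : ∀ x y : Q, mul (mul x y) x = mul x y) :
    ∀ x y z : Q, mul (mul z x) y = mul (mul z y) x := by
  intro x y z
  apply rinj z
  show mul (mul (mul z x) y) z = mul (mul (mul z y) x) z
  calc mul (mul (mul z x) y) z
      = mul (mul (mul z x) y) (mul z z) := by rw [RightQuandle.idem]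
    _ = mul (mul (mul z x) z) (mul y z) := hm (mul z x) y z z
    _ = mul (mul z x) (mul y z) := by rw [hg]
    _ = mul (mul z y) (mul x z) := hm z x y z
    _ = mul (mul (mul z y) z) (mul x z) := by rw [hg]
    _ = mul (mul (mul z y) x) (mul z z) := (hm (mul z y) x z z).symm
    _ = mul (mul (mul z y) x) z := by rw [RightQuandle.idem]

end Aux



/-- Let `Q` be a quandle. The right multiplication group `Rmlt(Q)` is abelian if
and only if `Q` is both medial (`(x*u)*(v*y) = (x*v)*(u*y)`) and graphic
(`(x*y)*x = x*y`). -/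
theorem quandle_rmlt_abelian_iff_medial_graphic {Q : Type*} [RightQuandle Q] :
    (∀ g ∈ RightRack.rmlt Q, ∀ h ∈ RightRack.rmlt Q, g * h = h * g) ↔
      ((∀ x u v y : Q, RightRack.mul (RightRack.mul x u) (RightRack.mul v y)
          = RightRack.mul (RightRack.mul x v) (RightRack.mul u y)) ∧
        (∀ x y : Q, RightRack.mul (RightRack.mul x y) x = RightRack.mul x y)) := by
  constructor
  · intro hab
    have key : ∀ x y z : Q, mul (mul z x) y = mul (mul z y) x := by
      intro x y z
      have hx : rt x ∈ rmlt Q := Subgroup.subset_closure ⟨x, rfl⟩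
      have hy : rt y ∈ rmlt Q := Subgroup.subset_closure ⟨y, rfl⟩
      have h := hab (rt y) hy (rt x) hx
      have h2 := congrArg (fun (e : Equiv.Perm Q) => e z) h
      simpa [rt, Equiv.Perm.mul_apply] using h2
    have absorb : ∀ a v y : Q, mul a (mul v y) = mul a v := by
      intro a v y
      have h1 : mul (mul (div a y) y) (mul v y) = mul (mul (div a y) v) y :=
        (self_distrib (div a y) v y).symm
      rw [RightRack.div_mul] at h1
      rw [h1, key v y (div a y), RightRack.div_mul]
    refine ⟨fun x u v y => ?_, fun x y => ?_⟩
    · rw [absorb (mul x u) v y, absorb (mul x v) u y, key u v x]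
    · rw [key y x x, RightQuandle.idem]
  · rintro ⟨hm, hg⟩
    have key := key_of_mg hm hg
    have hgen : ∀ x y : Q, Commute (rt x) (rt y) := by
      intro x y
      ext a
      simp only [Equiv.Perm.mul_apply]
      show mul (mul a y) x = mul (mul a x) y
      exact (key x y a).symm
    have main : ∀ g ∈ rmlt Q, ∀ h ∈ rmlt Q, Commute g h := by
      intro g hg' h hh'
      refine Subgroup.closure_induction₂ ?_ ?_ ?_ ?_ ?_ ?_ ?_ hg' hh'
      · rintro _ _ ⟨x, rfl⟩ ⟨y, rfl⟩; exact hgen x y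
      · intro x hx; exact Commute.one_left x
      · intro x hx; exact Commute.one_right x
      · intro x y z hx hy hz h1 h2; exact h1.mul_left h2
      · intro y z x hy hz hx h1 h2; exact h1.mul_right h2
      · intro x y hx hy h1; exact h1.inv_left
      · intro x y hx hy h1; exact h1.inv_right
    exact fun g hg' h hh' => main g hg' h hh'
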